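/- If G is a finite group all of whose nontrivial cyclic subgroups have order 2 or 4, and the number of cyclic subgroups of order 4 is odd, then either G has exactly one cyclic subgroup of order 4 and G ≅ C_4 or D_8, or G has exactly three cyclic subgroups of order 4 and G ≅ Q_8. -/

import Mathlib

set_option linter.unusedSectionVars false

open Subgroup

section base
variable {G : Type*} [Group G] [Finite G]

lemma my_isCyclic_zpowers (x : G) : IsCyclic (zpowers x) := by
  refine ⟨⟨⟨x, mem_zpowers x⟩, ?_⟩⟩
  rintro ⟨y, hy⟩
  obtain ⟨k, hk⟩ := hy
  exact ⟨k, by ext; simpa using hk⟩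

lemma my_ord24 (hall : ∀ H : Subgroup G, IsCyclic H → H ≠ ⊥ →
      Nat.card H = 2 ∨ Nat.card H = 4) (x : G) (hx : x ≠ 1) :
    orderOf x = 2 ∨ orderOf x = 4 := by
  have h := hall (zpowers x) (my_isCyclic_zpowers x)
    (by simpa [Subgroup.zpowers_eq_bot] using hx)
  simpa [Nat.card_zpowers] using h

lemma my_exp4 (hall : ∀ H : Subgroup G, IsCyclic H → H ≠ ⊥ →
      Nat.card H = 2 ∨ Nat.card H = 4) (x : G) : x ^ 4 = 1 := by
  by_cases hx : x = 1
  · simp [hx]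
  · rcases my_ord24 hall x hx with h | h
    · have h2 : x ^ 2 = 1 := by rw [← h]; exact pow_orderOf_eq_one x
      have : x ^ 4 = (x ^ 2) ^ 2 := by rw [← pow_mul]
      rw [this, h2, one_pow]
    · rw [← h]; exact pow_orderOf_eq_one x

lemma my_pgroup (hall : ∀ H : Subgroup G, IsCyclic H → H ≠ ⊥ →
      Nat.card H = 2 ∨ Nat.card H = 4) : IsPGroup 2 G :=
  fun g => ⟨2, by simpa using my_exp4 hall g⟩

-- enumeration of zpowers of an element of order 4
lemma my_zpow_reduce {a : G} (ha4 : a ^ 4 = 1) (k : ℤ) : ∃ m : ℕ, m < 4 ∧ a ^ k = a ^ m := by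
  refine ⟨(k % 4).toNat, ?_, ?_⟩
  · have h1 : k % 4 < 4 := Int.emod_lt_of_pos k (by norm_num)
    omega
  · have h0 : (0:ℤ) ≤ k % 4 := Int.emod_nonneg k (by norm_num)
    have h1 : a ^ k = a ^ (k % 4) := by
      conv_lhs => rw [← Int.mul_ediv_add_emod k 4]
      rw [zpow_add, zpow_mul, show ((4:ℤ)) = ((4:ℕ):ℤ) by norm_num, zpow_natCast, ha4,
        one_zpow, one_mul]
    rw [h1, ← zpow_natCast]
    congr 1
    omega

lemma my_mem_zpowers_iff {a : G} (ha4 : a ^ 4 = 1) (x : G) :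
    x ∈ zpowers a ↔ x = 1 ∨ x = a ∨ x = a ^ 2 ∨ x = a ^ 3 := by
  constructor
  · rintro ⟨k, rfl⟩
    obtain ⟨m, hm, he⟩ := my_zpow_reduce ha4 k
    interval_cases m <;> simp_all
  · rintro (rfl | rfl | rfl | rfl)
    · exact Subgroup.one_mem _
    · exact mem_zpowers _
    · exact pow_mem (mem_zpowers _) 2
    · exact pow_mem (mem_zpowers _) 3

lemma my_inv_eq_cube {a : G} (ha4 : a ^ 4 = 1) : a⁻¹ = a ^ 3 := by
  rw [eq_comm, eq_inv_iff_mul_eq_one, ← pow_succ, ha4]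

lemma my_pow_reduce {a : G} (ha4 : a ^ 4 = 1) (k : ℕ) : a ^ k = a ^ (k % 4) := by
  conv_lhs => rw [← Nat.div_add_mod k 4]
  rw [pow_add, pow_mul, ha4, one_pow, one_mul]

lemma my_pow_inv {a : G} (ha4 : a ^ 4 = 1) (i : ℕ) (hi : i ≤ 4) : (a ^ i)⁻¹ = a ^ (4 - i) := by
  rw [eq_comm, eq_inv_iff_mul_eq_one, ← pow_add]
  have : 4 - i + i = 4 := by omega
  rw [this, ha4]


end base


section orbits
variable {G : Type*} [Group G] [Finite G] [DecidableEq G]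

private def orb (a y : G) : Finset G := (Finset.range 4).image (fun i => a ^ i * y)

lemma orb_mem_iff {a y v : G} : v ∈ orb a y ↔ ∃ i < 4, a ^ i * y = v := by
  simp [orb]

lemma orb_card {a : G} (ha : orderOf a = 4) (y : G) : (orb a y).card = 4 := by
  rw [orb, Finset.card_image_of_injOn, Finset.card_range]
  intro i hi j hj hij
  simp only [Finset.coe_range, Set.mem_Iio] at hi hj
  have : a ^ i = a ^ j := mul_right_cancel hij
  exact pow_injOn_Iio_orderOf (by rwa [Set.mem_Iio, ha]) (by rwa [Set.mem_Iio, ha]) this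

lemma orb_self_mem {a : G} (y : G) : y ∈ orb a y :=
  orb_mem_iff.2 ⟨0, by norm_num⟩

lemma orb_mul_mem {a : G} (ha4 : a ^ 4 = 1) {y v : G} (hv : v ∈ orb a y) :
    a * v ∈ orb a y := by
  obtain ⟨i, hi, rfl⟩ := orb_mem_iff.1 hv
  rcases Nat.lt_or_ge (i+1) 4 with h | h
  · exact orb_mem_iff.2 ⟨i+1, h, by rw [pow_succ']; group⟩
  · have : i = 3 := by omega
    subst this
    refine orb_mem_iff.2 ⟨0, by norm_num, ?_⟩
    rw [← mul_assoc, ← pow_succ', ha4]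
    group

lemma orb_pre_mul {a : G} (ha4 : a ^ 4 = 1) {y v : G} (hv : a * v ∈ orb a y) :
    v ∈ orb a y := by
  have h2 := orb_mul_mem ha4 (orb_mul_mem ha4 (orb_mul_mem ha4 hv))
  have he : a * (a * (a * (a * v))) = v := by
    rw [show a * (a * (a * (a * v))) = a ^ 4 * v by simp [pow_succ, mul_assoc], ha4, one_mul]
  rwa [he] at h2

/-- divisibility by 4 from a free action of ⟨a⟩ by left multiplication -/
lemma my_dvd4 {a : G} (ha : orderOf a = 4) (s : Finset G)
    (hmul : ∀ x ∈ s, a * x ∈ s) : 4 ∣ s.card := by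
  have ha4 : a ^ 4 = 1 := by rw [← ha]; exact pow_orderOf_eq_one a
  induction s using Finset.strongInduction with
  | _ s ih =>
  rcases s.eq_empty_or_nonempty with rfl | ⟨x, hx⟩
  · simp
  · have hos : orb a x ⊆ s := by
      intro v hv
      obtain ⟨i, hi, rfl⟩ := orb_mem_iff.1 hv
      clear hv
      induction i with
      | zero => simpa using hx
      | succ n ihn =>
        have hn := ihn (by omega)
        have := hmul _ hn
        rwa [← mul_assoc, ← pow_succ'] at this
    have hsub : s \ orb a x ⊂ s := Finset.sdiff_ssubset hos ⟨x, orb_self_mem x⟩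
    have hclosed : ∀ y ∈ s \ orb a x, a * y ∈ s \ orb a x := by
      intro y hy
      rw [Finset.mem_sdiff] at hy ⊢
      exact ⟨hmul _ hy.1, fun hc => hy.2 (orb_pre_mul ha4 hc)⟩
    have hdvd := ih _ hsub hclosed
    have hcard := Finset.card_sdiff_add_card_eq_card hos
    rw [orb_card ha] at hcard
    omega

end orbits

section dvd8
variable {G : Type*} [Group G] [Finite G] [DecidableEq G]

lemma my_swap_pow {a x : G} (ha4 : a ^ 4 = 1) (hc : x * a = a * x ∨ x * a = a⁻¹ * x) (k : ℕ) :
    ∃ m, m < 4 ∧ x * a ^ k = a ^ m * x := by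
  induction k with
  | zero => exact ⟨0, by norm_num, by simp⟩
  | succ n ih =>
    obtain ⟨m, hm, he⟩ := ih
    have step : x * a ^ (n + 1) = a ^ m * (x * a) := by
      rw [pow_succ, ← mul_assoc, he, mul_assoc]
    rcases hc with hc | hc
    · refine ⟨(m + 1) % 4, Nat.mod_lt _ (by norm_num), ?_⟩
      rw [step, hc, ← mul_assoc, ← pow_succ, ← my_pow_reduce ha4]
    · refine ⟨(m + 3) % 4, Nat.mod_lt _ (by norm_num), ?_⟩
      rw [step, hc, ← mul_assoc, my_inv_eq_cube ha4, ← pow_add, ← my_pow_reduce ha4]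

lemma my_conj_flip {a x : G} (hc : x * a * x⁻¹ = a ∨ x * a * x⁻¹ = a⁻¹) :
    (x * a = a * x ∨ x * a = a⁻¹ * x) ∧ (x⁻¹ * a = a * x⁻¹ ∨ x⁻¹ * a = a⁻¹ * x⁻¹) := by
  rcases hc with hc | hc
  · have h1 : x * a = a * x := by rwa [mul_inv_eq_iff_eq_mul] at hc
    have h2 : Commute x⁻¹ a := Commute.inv_left h1
    exact ⟨Or.inl h1, Or.inl h2⟩
  · have h1 : x * a = a⁻¹ * x := by rwa [mul_inv_eq_iff_eq_mul] at hc
    have hinv : x * a⁻¹ * x⁻¹ = a := by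
      have h3 := congrArg (·⁻¹) hc
      simp only [mul_inv_rev, inv_inv] at h3
      rw [mul_assoc]
      exact h3
    have h2 : x⁻¹ * a = a⁻¹ * x⁻¹ := by
      calc x⁻¹ * a = x⁻¹ * (x * a⁻¹ * x⁻¹) := by rw [hinv]
        _ = a⁻¹ * x⁻¹ := by group
    exact ⟨Or.inr h1, Or.inr h2⟩

lemma my_dvd8 {a : G} (ha : orderOf a = 4) (hexp : ∀ g : G, g ^ 4 = 1) (s : Finset G)
    (hmul : ∀ x ∈ s, a * x ∈ s) (hinv : ∀ x ∈ s, x⁻¹ ∈ s)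
    (hconj : ∀ x ∈ s, x * a * x⁻¹ = a ∨ x * a * x⁻¹ = a⁻¹)
    (hsq : ∀ x ∈ s, x ^ 2 ≠ 1 ∧ x ^ 2 ≠ a ^ 2) : 8 ∣ s.card := by
  have ha4 : a ^ 4 = 1 := hexp a
  have ha2 : a ^ 2 ≠ 1 := by
    intro h
    have := orderOf_dvd_of_pow_eq_one h
    rw [ha] at this
    omega
  induction s using Finset.strongInduction with
  | _ s ih =>
  rcases s.eq_empty_or_nonempty with rfl | ⟨x, hx⟩
  · simp
  · have hxs' : x⁻¹ ∈ s := hinv x hx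
    have horbsub : ∀ y ∈ s, orb a y ⊆ s := by
      intro y hy v hv
      obtain ⟨i, hi, rfl⟩ := orb_mem_iff.1 hv
      clear hv
      induction i with
      | zero => simpa using hy
      | succ n ihn =>
        have hn := ihn (by omega)
        have := hmul _ hn
        rwa [← mul_assoc, ← pow_succ'] at this
    set o : Finset G := orb a x ∪ orb a x⁻¹ with ho
    have hdisj : Disjoint (orb a x) (orb a x⁻¹) := by
      rw [Finset.disjoint_left]
      rintro v h1 h2
      obtain ⟨i, hi, hie⟩ := orb_mem_iff.1 h1
      obtain ⟨j, hj, hje⟩ := orb_mem_iff.1 h2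
      -- a ^ i * x = a ^ j * x⁻¹
      have he : a ^ i * x = a ^ j * x⁻¹ := by rw [hie, hje]
      have hxx : x = a ^ (4 - i) * a ^ j * x⁻¹ := by
        rw [mul_assoc, ← he, ← mul_assoc, ← pow_add]
        have h4i : 4 - i + i = 4 := by omega
        rw [h4i, ha4, one_mul]
      have hx2' : x ^ 2 = a ^ (4 - i + j) := by
        have hstep : x * x = a ^ (4 - i) * a ^ j * x⁻¹ * x := by rw [← hxx]
        rw [pow_two, hstep, mul_assoc (a ^ (4 - i) * a ^ j) x⁻¹ x, inv_mul_cancel,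
          mul_one, ← pow_add]
      have hx2 : x ^ 2 = a ^ ((4 - i + j) % 4) := by rw [hx2', my_pow_reduce ha4]
      set m := (4 - i + j) % 4 with hm
      have hmlt : m < 4 := Nat.mod_lt _ (by norm_num)
      have hs1 := (hsq x hx).1
      have hs2 := (hsq x hx).2
      have hx4 : x ^ 4 = 1 := hexp x
      have hx4' : (x ^ 2) ^ 2 = 1 := by rw [← pow_mul]; exact hx4
      interval_cases m
      · rw [pow_zero] at hx2; exact hs1 hx2
      · rw [hx2, ← pow_mul] at hx4'
        norm_num at hx4'
        exact ha2 hx4'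
      · exact hs2 hx2
      · rw [hx2, ← pow_mul] at hx4'
        rw [show (3*2) = 4 + 2 by norm_num, pow_add, ha4, one_mul] at hx4'
        exact ha2 hx4'
    have hocard : o.card = 8 := by
      rw [ho, Finset.card_union_of_disjoint hdisj, orb_card ha, orb_card ha]
    have hos : o ⊆ s := by
      rw [ho]
      exact Finset.union_subset (horbsub x hx) (horbsub x⁻¹ hxs')
    have hsub : s \ o ⊂ s := Finset.sdiff_ssubset hos ⟨x, by rw [ho]; exact Finset.mem_union_left _ (orb_self_mem x)⟩
    -- closure of o under inverse
    have hoinv : ∀ v ∈ o, v⁻¹ ∈ o := by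
      intro v hv
      obtain ⟨hcx, hcxi⟩ := my_conj_flip (hconj x hx)
      rw [ho, Finset.mem_union] at hv ⊢
      rcases hv with hv | hv
      · obtain ⟨i, hi, rfl⟩ := orb_mem_iff.1 hv
        right
        rw [mul_inv_rev, my_pow_inv ha4 i (by omega)]
        obtain ⟨m, hm, he⟩ := my_swap_pow ha4 hcxi (4 - i)
        rw [he]
        exact orb_mem_iff.2 ⟨m, hm, rfl⟩
      · obtain ⟨i, hi, rfl⟩ := orb_mem_iff.1 hv
        left
        rw [mul_inv_rev, my_pow_inv ha4 i (by omega), inv_inv]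
        obtain ⟨m, hm, he⟩ := my_swap_pow ha4 hcx (4 - i)
        rw [he]
        exact orb_mem_iff.2 ⟨m, hm, rfl⟩
    have homul : ∀ v, a * v ∈ o → v ∈ o := by
      intro v hv
      rw [ho, Finset.mem_union] at hv ⊢
      rcases hv with hv | hv
      · exact Or.inl (orb_pre_mul ha4 hv)
      · exact Or.inr (orb_pre_mul ha4 hv)
    have hclosed : ∀ y ∈ s \ o, a * y ∈ s \ o := by
      intro y hy
      rw [Finset.mem_sdiff] at hy ⊢
      exact ⟨hmul _ hy.1, fun hc => hy.2 (homul _ hc)⟩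
    have hclinv : ∀ y ∈ s \ o, y⁻¹ ∈ s \ o := by
      intro y hy
      rw [Finset.mem_sdiff] at hy ⊢
      refine ⟨hinv _ hy.1, fun hc => hy.2 ?_⟩
      have := hoinv _ hc
      rwa [inv_inv] at this
    have hdvd := ih _ hsub hclosed hclinv
      (fun y hy => hconj y (Finset.mem_sdiff.1 hy).1)
      (fun y hy => hsq y (Finset.mem_sdiff.1 hy).1)
    have hcard := Finset.card_sdiff_add_card_eq_card hos
    rw [hocard] at hcard
    omega

end dvd8

section counting
variable {G : Type*} [Group G] [Finite G]

lemma my_cyclic4_gen (K : Subgroup G) (hc : IsCyclic K) (hcard : Nat.card K = 4) :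
    ∃ g : G, orderOf g = 4 ∧ Subgroup.zpowers g = K := by
  obtain ⟨⟨y, hy⟩, hgen⟩ := hc.exists_generator
  have hzp : Subgroup.zpowers y = K := by
    apply le_antisymm (Subgroup.zpowers_le.2 hy)
    intro t ht
    obtain ⟨k, hk⟩ := hgen ⟨t, ht⟩
    refine ⟨k, ?_⟩
    have := congrArg (Subtype.val) hk
    simpa using this
  refine ⟨y, ?_, hzp⟩
  rw [← Nat.card_zpowers, hzp, hcard]

lemma my_order4_sq_ne_one {g : G} (hg : orderOf g = 4) : g ^ 2 ≠ 1 := by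
  intro h
  have := orderOf_dvd_of_pow_eq_one h
  rw [hg] at this; omega

lemma my_order4_ne_one {g : G} (hg : orderOf g = 4) : g ≠ 1 := by
  intro h; rw [h] at hg; simp at hg

lemma my_order4_cube {g : G} (hg : orderOf g = 4) : orderOf (g ^ 3) = 4 := by
  have h4 : g ^ 4 = 1 := by rw [← hg]; exact pow_orderOf_eq_one g
  rw [← my_inv_eq_cube h4, orderOf_inv, hg]

lemma my_order4_ne_cube {g : G} (hg : orderOf g = 4) : g ≠ g ^ 3 := by
  intro h
  have h4 : g ^ 4 = 1 := by rw [← hg]; exact pow_orderOf_eq_one g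
  have : g * g = g ^ 3 * g := by rw [← h]
  rw [← pow_succ, ← pow_two, h4] at this
  exact my_order4_sq_ne_one hg this

lemma my_two_mul_card
    (hall : ∀ H : Subgroup G, IsCyclic H → H ≠ ⊥ → Nat.card H = 2 ∨ Nat.card H = 4) :
    Nat.card {H : Subgroup G // IsCyclic H ∧ Nat.card H = 4} * 2
      = Nat.card {x : G // orderOf x = 4} := by
  classical
  have h4 := my_exp4 hall
  have _ : Fintype G := Fintype.ofFinite G
  have _ : Fintype (Subgroup G) := Fintype.ofFinite _
  have hcards : Nat.card {H : Subgroup G // IsCyclic H ∧ Nat.card H = 4}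
      = (Finset.univ.filter (fun K : Subgroup G => IsCyclic K ∧ Nat.card K = 4)).card := by
    rw [Nat.card_eq_fintype_card, Fintype.card_subtype]
  have hcardx : Nat.card {x : G // orderOf x = 4}
      = (Finset.univ.filter (fun x : G => orderOf x = 4)).card := by
    rw [Nat.card_eq_fintype_card, Fintype.card_subtype]
  rw [hcards, hcardx]
  rw [Finset.card_eq_sum_card_fiberwise
    (f := fun x : G => Subgroup.zpowers x)
    (t := Finset.univ.filter (fun K : Subgroup G => IsCyclic K ∧ Nat.card K = 4)) ?_]
  · rw [Finset.sum_congr rfl ?_, Finset.sum_const, smul_eq_mul]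
    intro K hK
    simp only [Finset.mem_filter, Finset.mem_univ, true_and] at hK
    obtain ⟨g, hg4, rfl⟩ := my_cyclic4_gen K hK.1 hK.2
    have hg4' : g ^ 4 = 1 := by rw [← hg4]; exact pow_orderOf_eq_one g
    have hset : (Finset.univ.filter (fun x : G => orderOf x = 4)).filter
        (fun x => Subgroup.zpowers x = Subgroup.zpowers g) = {g, g ^ 3} := by
      ext t
      simp only [Finset.mem_filter, Finset.mem_univ, true_and, Finset.mem_insert,
        Finset.mem_singleton]
      constructor
      · rintro ⟨ht4, htz⟩
        have htm : t ∈ Subgroup.zpowers g := by rw [← htz]; exact Subgroup.mem_zpowers t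
        rcases (my_mem_zpowers_iff hg4' t).1 htm with rfl | rfl | rfl | rfl
        · exact absurd ht4 (by simp)
        · exact Or.inl rfl
        · exfalso
          have : (g ^ 2) ^ 2 = 1 := by rw [← pow_mul]; exact hg4'
          have hd := orderOf_dvd_of_pow_eq_one this
          rw [ht4] at hd; omega
        · exact Or.inr rfl
      · rintro (rfl | rfl)
        · exact ⟨hg4, rfl⟩
        · refine ⟨my_order4_cube hg4, ?_⟩
          rw [← my_inv_eq_cube hg4', Subgroup.zpowers_inv]
    rw [hset, Finset.card_insert_of_notMem (by simpa using my_order4_ne_cube hg4),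
      Finset.card_singleton]
  · intro x hx
    simp only [Finset.mem_filter, Finset.mem_univ, true_and] at hx ⊢
    exact Finset.mem_filter.2 ⟨Finset.mem_univ _, my_isCyclic_zpowers x, by rw [Nat.card_zpowers, (Finset.mem_filter.1 hx).2]⟩

end counting

section normal
open Pointwise
variable {G : Type*} [Group G] [Finite G]

lemma my_smul_preserves (g : ConjAct G) (K : Subgroup G)
    (h : IsCyclic K ∧ Nat.card K = 4) : IsCyclic (g • K : Subgroup G) ∧ Nat.card (g • K : Subgroup G) = 4 := by
  have e := Subgroup.equivSMul g K
  constructor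
  · have := h.1
    exact isCyclic_of_surjective e.toMonoidHom e.surjective
  · rw [← Nat.card_congr e.toEquiv, h.2]

lemma my_exists_normal
    (hall : ∀ H : Subgroup G, IsCyclic H → H ≠ ⊥ → Nat.card H = 2 ∨ Nat.card H = 4)
    (hodd : Odd (Nat.card {H : Subgroup G // IsCyclic H ∧ Nat.card H = 4})) :
    ∃ a : G, orderOf a = 4 ∧ ∀ x : G, x * a * x⁻¹ = a ∨ x * a * x⁻¹ = a⁻¹ := by
  classical
  have hexp := my_exp4 hall
  set X := {H : Subgroup G // IsCyclic H ∧ Nat.card H = 4} with hX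
  letI : MulAction (ConjAct G) X :=
    { smul := fun g K => ⟨g • K.1, my_smul_preserves g K.1 K.2⟩
      one_smul := fun K => Subtype.ext (one_smul _ K.1)
      mul_smul := fun g h K => Subtype.ext (mul_smul g h K.1) }
  have hsmul_def : ∀ (g : ConjAct G) (K : X), (g • K : X).1 = g • K.1 := fun _ _ => rfl
  have hP : IsPGroup 2 (ConjAct G) := fun g => ⟨2, by
    show (ConjAct.ofConjAct g) ^ (2 ^ 2) = 1
    exact hexp (ConjAct.ofConjAct g)⟩
  have hfin : Finite X := by
    have : Finite (Subgroup G) := inferInstance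
    exact Subtype.finite
  have key := IsPGroup.card_modEq_card_fixedPoints (p := 2) hP X
  have hoddfix : Odd (Nat.card (MulAction.fixedPoints (ConjAct G) X)) := by
    obtain ⟨k, hk⟩ := hodd
    unfold Nat.ModEq at key
    rw [hk] at key
    rcases Nat.even_or_odd (Nat.card (MulAction.fixedPoints (ConjAct G) X)) with he | ho
    · exfalso
      obtain ⟨m, hm⟩ := he
      omega
    · exact ho
  have hne : Nonempty (MulAction.fixedPoints (ConjAct G) X) := by
    rcases hoddfix with ⟨k, hk⟩
    have : Nat.card (MulAction.fixedPoints (ConjAct G) X) ≠ 0 := by omega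
    exact Nat.card_ne_zero.1 this |>.1
  obtain ⟨⟨K, hKfix⟩⟩ := hne
  obtain ⟨a, ha4, hzp⟩ := my_cyclic4_gen K.1 K.2.1 K.2.2
  have ha4' : a ^ 4 = 1 := by rw [← ha4]; exact pow_orderOf_eq_one a
  have ha2 : a ^ 2 ≠ 1 := my_order4_sq_ne_one ha4
  refine ⟨a, ha4, fun x => ?_⟩
  have hmem : x * a * x⁻¹ ∈ K.1 := by
    have h1 : a ∈ K.1 := by rw [← hzp]; exact Subgroup.mem_zpowers a
    have h2 := hKfix (ConjAct.toConjAct x)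
    have h3 : (ConjAct.toConjAct x) • a ∈ ((ConjAct.toConjAct x) • K : X).1 := by
      rw [hsmul_def]
      exact Subgroup.smul_mem_pointwise_smul _ _ _ h1
    rw [h2] at h3
    rwa [ConjAct.smul_def, ConjAct.ofConjAct_toConjAct] at h3
  rw [← hzp] at hmem
  rcases (my_mem_zpowers_iff ha4' _).1 hmem with h | h | h | h
  · exfalso
    have : a = 1 := by
      have := congrArg (fun t => x⁻¹ * t * x) h
      simpa [mul_assoc] using this
    exact my_order4_ne_one ha4 this
  · exact Or.inl h
  · exfalso
    have hsq : (x * a * x⁻¹) * (x * a * x⁻¹) = x * a ^ 2 * x⁻¹ := by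
      rw [pow_two]; group
    rw [h, ← pow_two] at hsq
    rw [← pow_mul] at hsq
    norm_num at hsq
    rw [ha4'] at hsq
    have : a ^ 2 = 1 := by
      have := congrArg (fun t => x⁻¹ * t * x) hsq.symm
      simpa [mul_assoc] using this
    exact ha2 this
  · rw [← my_inv_eq_cube ha4'] at h
    exact Or.inr h

end normal

section core
variable {G : Type*} [Group G] [Finite G]

lemma my_order4_iff
    (hall : ∀ H : Subgroup G, IsCyclic H → H ≠ ⊥ → Nat.card H = 2 ∨ Nat.card H = 4)
    (x : G) : orderOf x = 4 ↔ x ^ 2 ≠ 1 := by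
  constructor
  · exact fun h => my_order4_sq_ne_one h
  · intro h
    have hx1 : x ≠ 1 := by rintro rfl; simp at h
    rcases my_ord24 hall x hx1 with h2 | h4
    · exact absurd (by rw [← h2]; exact pow_orderOf_eq_one x) h
    · exact h4

lemma my_comm_mul_sq {a x : G} (h : x * a = a * x) : (a * x) ^ 2 = a ^ 2 * x ^ 2 := by
  rw [pow_two, pow_two, pow_two]
  calc a * x * (a * x) = a * (x * a) * x := by group
    _ = a * (a * x) * x := by rw [h]
    _ = a * a * (x * x) := by group

lemma my_anticomm_mul_sq {a x : G} (h : x * a * x⁻¹ = a⁻¹) : (a * x) ^ 2 = x ^ 2 := by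
  have h1 : x * a = a⁻¹ * x := by rwa [mul_inv_eq_iff_eq_mul] at h
  rw [pow_two, pow_two]
  calc a * x * (a * x) = a * (x * a) * x := by group
    _ = a * (a⁻¹ * x) * x := by rw [h1]
    _ = x * x := by group

lemma my_sq_com {a x : G} (h : x * a = a * x) : x ^ 2 * a = a * x ^ 2 := by
  rw [pow_two]
  calc x * x * a = x * (x * a) := by group
    _ = x * (a * x) := by rw [h]
    _ = (x * a) * x := by group
    _ = (a * x) * x := by rw [h]
    _ = a * (x * x) := by group

lemma my_centralizer_eq
    (hall : ∀ H : Subgroup G, IsCyclic H → H ≠ ⊥ → Nat.card H = 2 ∨ Nat.card H = 4)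
    (hodd : Odd (Nat.card {H : Subgroup G // IsCyclic H ∧ Nat.card H = 4}))
    {a : G} (ha4 : orderOf a = 4)
    (hnorm : ∀ x : G, x * a * x⁻¹ = a ∨ x * a * x⁻¹ = a⁻¹) :
    Subgroup.centralizer {a} = Subgroup.zpowers a := by
  classical
  have _ : Fintype G := Fintype.ofFinite G
  have hexp := my_exp4 hall
  have ha4' : a ^ 4 = 1 := by rw [← ha4]; exact pow_orderOf_eq_one a
  have ha2 : a ^ 2 ≠ 1 := my_order4_sq_ne_one ha4
  set P : G → Prop := fun x => x * a = a * x with hP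
  have hanti : ∀ x : G, ¬ P x → x * a * x⁻¹ = a⁻¹ := by
    intro x hx
    rcases hnorm x with h | h
    · exact absurd (by rwa [mul_inv_eq_iff_eq_mul] at h) hx
    · exact h
  have hPmul : ∀ x : G, P x → P (a * x) := by
    intro x hx
    show (a * x) * a = a * (a * x)
    calc (a * x) * a = a * (x * a) := by group
      _ = a * (a * x) := by rw [hx]
  have hPinv : ∀ x : G, P x → P x⁻¹ := by
    intro x hx
    have hx' : Commute x a := hx
    exact hx'.inv_left
  have hnPmul : ∀ x : G, ¬ P x → ¬ P (a * x) := by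
    intro x hx hc
    apply hx
    have : a * ((a * x) * a) = a * (a * (x * a)) := by group
    have h2 : (a * x) * a = a * (a * x) := hc
    have := congrArg (fun t => a⁻¹ * t) h2
    simp only [← mul_assoc, inv_mul_cancel, one_mul] at this
    exact this
  have hnPinv : ∀ x : G, ¬ P x → ¬ P x⁻¹ := by
    intro x hx hc
    apply hx
    have := hPinv x⁻¹ hc
    rwa [inv_inv] at this
  set IC : Finset G := Finset.univ.filter (fun x => x ^ 2 = 1 ∧ P x) with hIC
  set TC : Finset G := Finset.univ.filter (fun x => x ^ 2 = a ^ 2 ∧ P x) with hTC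
  set SC : Finset G := Finset.univ.filter (fun x => x ^ 2 ≠ 1 ∧ x ^ 2 ≠ a ^ 2 ∧ P x) with hSC
  set TO : Finset G := Finset.univ.filter (fun x => x ^ 2 = a ^ 2 ∧ ¬ P x) with hTO
  set SO : Finset G := Finset.univ.filter (fun x => x ^ 2 ≠ 1 ∧ x ^ 2 ≠ a ^ 2 ∧ ¬ P x) with hSO
  have hICTC : IC.card = TC.card := by
    apply Finset.card_bij' (i := fun x _ => a * x) (j := fun y _ => a⁻¹ * y)
    · intro x hx
      simp only [hIC, Finset.mem_filter, Finset.mem_univ, true_and] at hx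
      simp only [hTC, Finset.mem_filter, Finset.mem_univ, true_and]
      exact ⟨by rw [my_comm_mul_sq hx.2, hx.1, mul_one], hPmul x hx.2⟩
    · intro y hy
      simp only [hTC, Finset.mem_filter, Finset.mem_univ, true_and] at hy
      simp only [hIC, Finset.mem_filter, Finset.mem_univ, true_and]
      have h2 : y * a⁻¹ = a⁻¹ * y := by
        have hy' : Commute y a := hy.2
        exact hy'.inv_right
      constructor
      · rw [my_comm_mul_sq h2, hy.1, inv_pow, inv_mul_cancel]
      · show (a⁻¹ * y) * a = a * (a⁻¹ * y)
        calc (a⁻¹ * y) * a = a⁻¹ * (y * a) := by group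
          _ = a⁻¹ * (a * y) := by rw [hy.2]
          _ = a * (a⁻¹ * y) := by group
    · intro x _; group
    · intro y _; group
  have hSCdvd : 8 ∣ SC.card := by
    apply my_dvd8 ha4 hexp
    · intro x hx
      simp only [hSC, Finset.mem_filter, Finset.mem_univ, true_and] at hx ⊢
      rw [my_comm_mul_sq hx.2.2]
      refine ⟨?_, ?_, hPmul x hx.2.2⟩
      · intro h
        apply hx.2.1
        have h5 : x ^ 2 = (a ^ 2)⁻¹ := by
          have := congrArg (fun t => (a ^ 2)⁻¹ * t) h
          simpa [← mul_assoc] using this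
        rw [h5, my_pow_inv ha4' 2 (by norm_num)]
      · intro h
        apply hx.1
        have := congrArg (fun t => (a ^ 2)⁻¹ * t) h
        simpa [← mul_assoc] using this
    · intro x hx
      simp only [hSC, Finset.mem_filter, Finset.mem_univ, true_and] at hx ⊢
      refine ⟨?_, ?_, hPinv x hx.2.2⟩
      · rw [inv_pow]
        simpa using hx.1
      · rw [inv_pow]
        intro h
        apply hx.2.1
        have h6 := congrArg (fun t => t⁻¹) h
        simp only [inv_inv] at h6
        rw [h6, my_pow_inv ha4' 2 (by norm_num)]
    · intro x hx
      simp only [hSC, Finset.mem_filter, Finset.mem_univ, true_and] at hx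
      left
      rw [hx.2.2, mul_assoc, mul_inv_cancel, mul_one]
    · intro x hx
      simp only [hSC, Finset.mem_filter, Finset.mem_univ, true_and] at hx
      exact ⟨hx.1, hx.2.1⟩
  have hSOdvd : 8 ∣ SO.card := by
    apply my_dvd8 ha4 hexp
    · intro x hx
      simp only [hSO, Finset.mem_filter, Finset.mem_univ, true_and] at hx ⊢
      rw [my_anticomm_mul_sq (hanti x hx.2.2)]
      exact ⟨hx.1, hx.2.1, hnPmul x hx.2.2⟩
    · intro x hx
      simp only [hSO, Finset.mem_filter, Finset.mem_univ, true_and] at hx ⊢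
      refine ⟨?_, ?_, hnPinv x hx.2.2⟩
      · rw [inv_pow]; simpa using hx.1
      · rw [inv_pow]
        intro h
        apply hx.2.1
        have h6 := congrArg (fun t => t⁻¹) h
        simp only [inv_inv] at h6
        rw [h6, my_pow_inv ha4' 2 (by norm_num)]
    · intro x hx
      simp only [hSO, Finset.mem_filter, Finset.mem_univ, true_and] at hx
      exact Or.inr (hanti x hx.2.2)
    · intro x hx
      simp only [hSO, Finset.mem_filter, Finset.mem_univ, true_and] at hx
      exact ⟨hx.1, hx.2.1⟩
  have hTOdvd : 4 ∣ TO.card := by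
    apply my_dvd4 ha4
    intro x hx
    simp only [hTO, Finset.mem_filter, Finset.mem_univ, true_and] at hx ⊢
    rw [my_anticomm_mul_sq (hanti x hx.2)]
    exact ⟨hx.1, hnPmul x hx.2⟩
  -- order-4 elements
  have hS4 : Finset.univ.filter (fun x : G => orderOf x = 4) = TC ∪ SC ∪ (TO ∪ SO) := by
    ext x
    simp only [hTC, hSC, hTO, hSO, Finset.mem_union, Finset.mem_filter, Finset.mem_univ,
      true_and]
    rw [my_order4_iff hall]
    constructor
    · intro h
      by_cases hp : P x <;> by_cases ht : x ^ 2 = a ^ 2 <;> tauto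
    · rintro ((⟨h1, _⟩ | ⟨h1, _⟩) | (⟨h1, _⟩ | ⟨h1, _⟩)) <;>
        first
          | (rw [h1]; exact ha2)
          | exact h1
  have hdisj1 : Disjoint TC SC := by
    rw [Finset.disjoint_left]
    intro x h1 h2
    simp only [hTC, hSC, Finset.mem_filter, Finset.mem_univ, true_and] at h1 h2
    exact h2.2.1 h1.1
  have hdisj2 : Disjoint TO SO := by
    rw [Finset.disjoint_left]
    intro x h1 h2
    simp only [hTO, hSO, Finset.mem_filter, Finset.mem_univ, true_and] at h1 h2
    exact h2.2.1 h1.1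
  have hdisj3 : Disjoint (TC ∪ SC) (TO ∪ SO) := by
    rw [Finset.disjoint_left]
    intro x h1 h2
    simp only [hTC, hSC, hTO, hSO, Finset.mem_union, Finset.mem_filter, Finset.mem_univ,
      true_and] at h1 h2
    rcases h1 with h1 | h1 <;> rcases h2 with h2 | h2 <;> tauto
  have hcard4 : (Finset.univ.filter (fun x : G => orderOf x = 4)).card
      = TC.card + SC.card + (TO.card + SO.card) := by
    rw [hS4, Finset.card_union_of_disjoint hdisj3, Finset.card_union_of_disjoint hdisj1,
      Finset.card_union_of_disjoint hdisj2]
  -- parity from hodd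
  have h2count : Nat.card {H : Subgroup G // IsCyclic H ∧ Nat.card H = 4} * 2
      = (Finset.univ.filter (fun x : G => orderOf x = 4)).card := by
    rw [my_two_mul_card hall, Nat.card_eq_fintype_card, Fintype.card_subtype]
  have hTCmod : TC.card % 4 = 2 := by
    obtain ⟨k, hk⟩ := hodd
    obtain ⟨m8, hm8⟩ := hSCdvd
    obtain ⟨m8', hm8'⟩ := hSOdvd
    obtain ⟨m4, hm4⟩ := hTOdvd
    rw [hk] at h2count
    omega
  -- centralizer as a finset
  have hCmem : ∀ x : G, x ∈ Subgroup.centralizer {a} ↔ P x := by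
    intro x
    rw [Subgroup.mem_centralizer_singleton_iff]
  have hCfin : Nat.card (Subgroup.centralizer {a} : Subgroup G)
      = (Finset.univ.filter P).card := by
    rw [Nat.card_eq_fintype_card]
    rw [← Fintype.card_subtype]
    apply Fintype.card_congr
    exact Equiv.subtypeEquivRight hCmem
  have hCunion : Finset.univ.filter P = IC ∪ TC ∪ SC := by
    ext x
    simp only [hIC, hTC, hSC, Finset.mem_union, Finset.mem_filter, Finset.mem_univ, true_and]
    constructor
    · intro h
      by_cases h1 : x ^ 2 = 1
      · tauto
      · by_cases h2 : x ^ 2 = a ^ 2 <;> tauto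
    · tauto
  have hdisj4 : Disjoint IC TC := by
    rw [Finset.disjoint_left]
    intro x h1 h2
    simp only [hIC, hTC, Finset.mem_filter, Finset.mem_univ, true_and] at h1 h2
    rw [h1.1] at h2
    exact ha2 h2.1.symm
  have hdisj5 : Disjoint (IC ∪ TC) SC := by
    rw [Finset.disjoint_left]
    intro x h1 h2
    simp only [hIC, hTC, hSC, Finset.mem_union, Finset.mem_filter, Finset.mem_univ,
      true_and] at h1 h2
    rcases h1 with h1 | h1
    · exact h2.1 h1.1
    · exact h2.2.1 h1.1
  have hCcard : (Finset.univ.filter P).card = IC.card + TC.card + SC.card := by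
    rw [hCunion, Finset.card_union_of_disjoint hdisj5, Finset.card_union_of_disjoint hdisj4]
  -- centralizer card ≡ 4 mod 8
  have hCmod : (Finset.univ.filter P).card % 8 = 4 := by
    obtain ⟨m8, hm8⟩ := hSCdvd
    omega
  -- centralizer is a 2-group
  have hCpow : ∃ n : ℕ, Nat.card (Subgroup.centralizer {a} : Subgroup G) = 2 ^ n := by
    have hP2 : IsPGroup 2 G := my_pgroup hall
    have := IsPGroup.to_subgroup hP2 (Subgroup.centralizer {a})
    exact IsPGroup.exists_card_eq this
  have hC4 : Nat.card (Subgroup.centralizer {a} : Subgroup G) = 4 := by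
    obtain ⟨n, hn⟩ := hCpow
    rw [hCfin] at hn
    have hn3 : n < 3 := by
      by_contra hc
      push_neg at hc
      obtain ⟨m, rfl⟩ : ∃ m, n = 3 + m := ⟨n - 3, by omega⟩
      rw [pow_add] at hn
      norm_num at hn
      omega
    interval_cases n <;> omega
  -- zpowers a ≤ centralizer and cards equal
  have hle : Subgroup.zpowers a ≤ Subgroup.centralizer {a} := by
    rw [Subgroup.zpowers_le, hCmem]
  have hzc : Nat.card (Subgroup.zpowers a : Subgroup G) = 4 := by
    rw [Nat.card_zpowers, ha4]
  exact (Subgroup.eq_of_le_of_card_ge hle (by rw [hC4, hzc])).symm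

end core

section psi
variable {G : Type*} [Group G] [Finite G]

lemma my_psi_add {a : G} (ha4' : a ^ 4 = 1) (i j : ZMod 4) :
    a ^ (i + j).val = a ^ i.val * a ^ j.val := by
  rw [← pow_add, ZMod.val_add, ← my_pow_reduce ha4']

lemma my_psi_zero {a : G} : a ^ (0 : ZMod 4).val = 1 := by
  norm_num

lemma my_psi_neg {a : G} (ha4' : a ^ 4 = 1) (i : ZMod 4) :
    a ^ (-i).val = (a ^ i.val)⁻¹ := by
  have h := my_psi_add ha4' (-i) i
  rw [neg_add_cancel] at h
  rw [my_psi_zero] at h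
  exact eq_inv_of_mul_eq_one_left h.symm

lemma my_psi_eq_one_iff {a : G} (ha4 : orderOf a = 4) (i : ZMod 4) :
    a ^ i.val = 1 ↔ i = 0 := by
  constructor
  · intro h
    have := orderOf_dvd_of_pow_eq_one h
    rw [ha4] at this
    have hlt : i.val < 4 := i.val_lt
    have : i.val = 0 := by omega
    exact (ZMod.val_eq_zero i).1 this
  · rintro rfl
    exact my_psi_zero

-- conjugation facts
lemma my_conj_pow_nat {a u : G} (hconj : u * a * u⁻¹ = a⁻¹) (k : ℕ) :
    u * a ^ k = (a ^ k)⁻¹ * u := by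
  have h1 : (MulAut.conj u) (a ^ k) = (a ^ k)⁻¹ := by
    rw [map_pow, MulAut.conj_apply, hconj, inv_pow]
  rw [MulAut.conj_apply] at h1
  calc u * a ^ k = (u * a ^ k * u⁻¹) * u := by group
    _ = (a ^ k)⁻¹ * u := by rw [h1]

lemma my_conj_pow_nat' {a u : G} (hconj : u * a * u⁻¹ = a⁻¹) (k : ℕ) :
    a ^ k * u = u * (a ^ k)⁻¹ := by
  have h1 : (MulAut.conj u) ((a ^ k)⁻¹) = a ^ k := by
    rw [map_inv, map_pow, MulAut.conj_apply, hconj, inv_pow, inv_inv]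
  rw [MulAut.conj_apply] at h1
  calc a ^ k * u = (u * (a ^ k)⁻¹ * u⁻¹) * u := by rw [h1]
    _ = u * (a ^ k)⁻¹ := by group

lemma my_conj_zpow {a u : G} (hconj : u * a * u⁻¹ = a⁻¹) (k : ℤ) :
    a ^ k * u = u * (a ^ k)⁻¹ := by
  have h1 : (MulAut.conj u) ((a ^ k)⁻¹) = a ^ k := by
    rw [map_inv, map_zpow, MulAut.conj_apply, hconj, inv_zpow, inv_inv]
  rw [MulAut.conj_apply] at h1
  calc a ^ k * u = (u * (a ^ k)⁻¹ * u⁻¹) * u := by rw [h1]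
    _ = u * (a ^ k)⁻¹ := by group

lemma my_out_sq {a u x : G} (hconj : u * a * u⁻¹ = a⁻¹) (hx : u⁻¹ * x ∈ Subgroup.zpowers a) :
    x ^ 2 = u ^ 2 := by
  obtain ⟨k, hk⟩ := hx
  simp only at hk
  have hxu : x = u * a ^ k := by
    rw [hk]
    group
  rw [pow_two, hxu]
  calc u * a ^ k * (u * a ^ k) = u * (a ^ k * u) * a ^ k := by group
    _ = u * (u * (a ^ k)⁻¹) * a ^ k := by rw [my_conj_zpow hconj k]
    _ = u * u := by group
    _ = u ^ 2 := by rw [pow_two]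

end psi

section isos
variable {G : Type*} [Group G] [Finite G]

lemma my_c4_iso {a : G} (ha4 : orderOf a = 4) (hcard : Nat.card G = 4) :
    Nonempty (G ≃* Multiplicative (ZMod 4)) := by
  have ha4' : a ^ 4 = 1 := by rw [← ha4]; exact pow_orderOf_eq_one a
  let f : Multiplicative (ZMod 4) →* G :=
    MonoidHom.mk' (fun i => a ^ (Multiplicative.toAdd i).val)
      (by
        intro x y
        show a ^ (Multiplicative.toAdd x + Multiplicative.toAdd y).val = _
        rw [my_psi_add ha4'])
  have hinj : Function.Injective f := by
    rw [injective_iff_map_eq_one]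
    intro i hi
    have : Multiplicative.toAdd i = 0 := (my_psi_eq_one_iff ha4 _).1 hi
    simpa using this
  have hbij : Function.Bijective f := by
    rw [Nat.bijective_iff_injective_and_card]
    refine ⟨hinj, ?_⟩
    rw [hcard]
    simp [Nat.card_eq_fintype_card]
  exact ⟨(MulEquiv.ofBijective f hbij).symm⟩

lemma my_d8_iso {a u : G} (ha4 : orderOf a = 4) (hcard : Nat.card G = 8)
    (hconj : u * a * u⁻¹ = a⁻¹) (hu2 : u ^ 2 = 1) (hnotin : u ∉ Subgroup.zpowers a) :
    Nonempty (G ≃* DihedralGroup 4) := by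
  have ha4' : a ^ 4 = 1 := by rw [← ha4]; exact pow_orderOf_eq_one a
  let fn : DihedralGroup 4 → G := fun x =>
    match x with
    | DihedralGroup.r i => a ^ i.val
    | DihedralGroup.sr i => u * a ^ i.val
  have hmul : ∀ x y : DihedralGroup 4, fn (x * y) = fn x * fn y := by
    rintro (i | i) (j | j)
    · show a ^ (i + j).val = a ^ i.val * a ^ j.val
      exact my_psi_add ha4' i j
    · show u * a ^ (j - i).val = a ^ i.val * (u * a ^ j.val)
      rw [← mul_assoc, my_conj_pow_nat' hconj, ← my_psi_neg ha4', mul_assoc,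
        ← my_psi_add ha4']
      congr 2
      ring
    · show u * a ^ (i + j).val = u * a ^ i.val * a ^ j.val
      rw [mul_assoc, ← my_psi_add ha4']
    · show a ^ (j - i).val = u * a ^ i.val * (u * a ^ j.val)
      have h1 : a ^ i.val * u = u * a ^ (-i).val := by
        rw [my_conj_pow_nat' hconj, my_psi_neg ha4']
      calc a ^ (j - i).val = a ^ ((-i) + j).val := by congr 1; ring
        _ = a ^ (-i).val * a ^ j.val := my_psi_add ha4' _ _
        _ = u ^ 2 * (a ^ (-i).val * a ^ j.val) := by rw [hu2, one_mul]
        _ = u * (u * a ^ (-i).val) * a ^ j.val := by rw [pow_two]; group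
        _ = u * (a ^ i.val * u) * a ^ j.val := by rw [h1]
        _ = u * a ^ i.val * (u * a ^ j.val) := by group
  let f : DihedralGroup 4 →* G := MonoidHom.mk' fn hmul
  have hinj : Function.Injective f := by
    rw [injective_iff_map_eq_one]
    rintro (i | i) hi
    · have : i = 0 := (my_psi_eq_one_iff ha4 _).1 hi
      rw [this]
      rfl
    · exfalso
      apply hnotin
      have : u = (a ^ i.val)⁻¹ := by
        have hi' : u * a ^ i.val = 1 := hi
        rw [eq_inv_iff_mul_eq_one]
        exact hi'
      rw [this]
      exact inv_mem (pow_mem (Subgroup.mem_zpowers a) _)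
  have hbij : Function.Bijective f := by
    rw [Nat.bijective_iff_injective_and_card]
    refine ⟨hinj, ?_⟩
    rw [hcard, Nat.card_eq_fintype_card, DihedralGroup.card]
  exact ⟨(MulEquiv.ofBijective f hbij).symm⟩

lemma my_q8_iso {a u : G} (ha4 : orderOf a = 4) (hcard : Nat.card G = 8)
    (hconj : u * a * u⁻¹ = a⁻¹) (hu2 : u ^ 2 = a ^ 2) (hnotin : u ∉ Subgroup.zpowers a) :
    Nonempty (G ≃* QuaternionGroup 2) := by
  have ha4' : a ^ 4 = 1 := by rw [← ha4]; exact pow_orderOf_eq_one a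
  have hval2 : ((2 : ℕ) : ZMod 4).val = 2 := by decide
  let fn : QuaternionGroup 2 → G := fun x =>
    match x with
    | QuaternionGroup.a i => a ^ (show ZMod 4 from i).val
    | QuaternionGroup.xa i => u * a ^ (show ZMod 4 from i).val
  have hmul : ∀ x y : QuaternionGroup 2, fn (x * y) = fn x * fn y := by
    rintro (i | i) (j | j)
    · show a ^ (i + j).val = a ^ i.val * a ^ j.val
      exact my_psi_add ha4' i j
    · show u * a ^ (j - i).val = a ^ i.val * (u * a ^ j.val)
      rw [← mul_assoc, my_conj_pow_nat' hconj, ← my_psi_neg ha4', mul_assoc,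
        ← my_psi_add ha4']
      congr 2
      ring
    · show u * a ^ (i + j).val = u * a ^ i.val * a ^ j.val
      rw [mul_assoc, ← my_psi_add ha4']
    · show a ^ (((2 : ℕ) : ZMod 4) + j - i).val = u * a ^ i.val * (u * a ^ j.val)
      have h1 : a ^ i.val * u = u * a ^ (-i).val := by
        rw [my_conj_pow_nat' hconj, my_psi_neg ha4']
      calc a ^ (((2 : ℕ) : ZMod 4) + j - i).val
          = a ^ (((2 : ℕ) : ZMod 4) + ((-i) + j)).val := by congr 1; ring
        _ = a ^ ((2 : ℕ) : ZMod 4).val * (a ^ (-i).val * a ^ j.val) := by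
            rw [my_psi_add ha4', my_psi_add ha4']
        _ = u ^ 2 * (a ^ (-i).val * a ^ j.val) := by rw [hval2, hu2]
        _ = u * (u * a ^ (-i).val) * a ^ j.val := by rw [pow_two]; group
        _ = u * (a ^ i.val * u) * a ^ j.val := by rw [h1]
        _ = u * a ^ i.val * (u * a ^ j.val) := by group
  let f : QuaternionGroup 2 →* G := MonoidHom.mk' fn hmul
  have hinj : Function.Injective f := by
    rw [injective_iff_map_eq_one]
    rintro (i | i) hi
    · have : i = 0 := (my_psi_eq_one_iff ha4 _).1 hi
      rw [this]
      rfl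
    · exfalso
      apply hnotin
      have : u = (a ^ i.val)⁻¹ := by
        have hi' : u * a ^ i.val = 1 := hi
        rw [eq_inv_iff_mul_eq_one]
        exact hi'
      rw [this]
      exact inv_mem (pow_mem (Subgroup.mem_zpowers a) _)
  have hbij : Function.Bijective f := by
    rw [Nat.bijective_iff_injective_and_card]
    refine ⟨hinj, ?_⟩
    rw [hcard, Nat.card_eq_fintype_card, QuaternionGroup.card]
  exact ⟨(MulEquiv.ofBijective f hbij).symm⟩

end isos

section endgame
variable {G : Type*} [Group G] [Finite G]

lemma my_conj_out_comm {a y z : G} (hy : y * a * y⁻¹ = a⁻¹) (hz : z * a * z⁻¹ = a⁻¹) :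
    (z⁻¹ * y) * a = a * (z⁻¹ * y) := by
  have h1 : z⁻¹ * a⁻¹ * z = a := by
    rw [← hz]
    group
  calc (z⁻¹ * y) * a = z⁻¹ * (y * a * y⁻¹) * y := by group
    _ = z⁻¹ * a⁻¹ * y := by rw [hy]
    _ = (z⁻¹ * a⁻¹ * z) * (z⁻¹ * y) := by group
    _ = a * (z⁻¹ * y) := by rw [h1]

theorem my_main (G : Type*) [Group G] [Finite G]
    (hall : ∀ H : Subgroup G, IsCyclic H → H ≠ ⊥ →
      Nat.card H = 2 ∨ Nat.card H = 4)
    (hodd : Odd (Nat.card {H : Subgroup G // IsCyclic H ∧ Nat.card H = 4})) :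
    (Nat.card {H : Subgroup G // IsCyclic H ∧ Nat.card H = 4} = 1 ∧
      (Nonempty (G ≃* Multiplicative (ZMod 4)) ∨ Nonempty (G ≃* DihedralGroup 4))) ∨
    (Nat.card {H : Subgroup G // IsCyclic H ∧ Nat.card H = 4} = 3 ∧
      Nonempty (G ≃* QuaternionGroup 2)) := by
  classical
  have _ : Fintype G := Fintype.ofFinite G
  obtain ⟨a, ha4, hnorm⟩ := my_exists_normal hall hodd
  have hcent := my_centralizer_eq hall hodd ha4 hnorm
  have hexp := my_exp4 hall
  have ha4' : a ^ 4 = 1 := by rw [← ha4]; exact pow_orderOf_eq_one a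
  have ha2 : a ^ 2 ≠ 1 := my_order4_sq_ne_one ha4
  have hcount2 : Nat.card {H : Subgroup G // IsCyclic H ∧ Nat.card H = 4} * 2
      = (Finset.univ.filter (fun x : G => orderOf x = 4)).card := by
    rw [my_two_mul_card hall, Nat.card_eq_fintype_card, Fintype.card_subtype]
  have hcc : Nat.card (Subgroup.centralizer {a} : Subgroup G) = 4 := by
    rw [hcent, Nat.card_zpowers, ha4]
  have ha2sq : (a ^ 2) ^ 2 = 1 := by rw [← pow_mul]; norm_num; exact ha4'
  have ha3o : orderOf (a ^ 3) = 4 := my_order4_cube ha4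
  by_cases hcen : ∀ x : G, x * a = a * x
  · -- G is cyclic of order 4
    have htop : Subgroup.zpowers a = ⊤ := by
      rw [← hcent]
      rw [eq_top_iff']
      intro x
      rw [Subgroup.mem_centralizer_singleton_iff]
      exact hcen x
    have hcardG : Nat.card G = 4 := by
      rw [← Subgroup.card_top (G := G), ← htop, Nat.card_zpowers, ha4]
    have hfil : Finset.univ.filter (fun x : G => orderOf x = 4) = {a, a ^ 3} := by
      ext x
      simp only [Finset.mem_filter, Finset.mem_univ, true_and, Finset.mem_insert,
        Finset.mem_singleton]
      constructor
      · intro hx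
        have hxz : x ∈ Subgroup.zpowers a := by rw [htop]; trivial
        rcases (my_mem_zpowers_iff ha4' x).1 hxz with rfl | rfl | rfl | rfl
        · exact absurd hx (by simp)
        · exact Or.inl rfl
        · exact absurd ha2sq (my_order4_sq_ne_one hx)
        · exact Or.inr rfl
      · rintro (rfl | rfl)
        · exact ha4
        · exact ha3o
    have hfc : (({a, a ^ 3} : Finset G)).card = 2 := by
      rw [Finset.card_insert_of_notMem (by simpa using my_order4_ne_cube ha4),
        Finset.card_singleton]
    have hcount : Nat.card {H : Subgroup G // IsCyclic H ∧ Nat.card H = 4} = 1 := by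
      rw [hfil, hfc] at hcount2
      omega
    exact Or.inl ⟨hcount, Or.inl (my_c4_iso ha4 hcardG)⟩
  · push_neg at hcen
    obtain ⟨u, hu⟩ := hcen
    have huanti : u * a * u⁻¹ = a⁻¹ := by
      rcases hnorm u with h | h
      · exact absurd (by rwa [mul_inv_eq_iff_eq_mul] at h) hu
      · exact h
    have hanti : ∀ x : G, ¬ (x * a = a * x) → x * a * x⁻¹ = a⁻¹ := by
      intro x hx
      rcases hnorm x with h | h
      · exact absurd (by rwa [mul_inv_eq_iff_eq_mul] at h) hx
      · exact h
    have hunot : u ∉ Subgroup.zpowers a := by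
      intro h
      rw [← hcent] at h
      exact hu (Subgroup.mem_centralizer_singleton_iff.1 h)
    have hmemz : ∀ x : G, x * a = a * x → x ∈ Subgroup.zpowers a := by
      intro x hx
      rw [← hcent]
      exact Subgroup.mem_centralizer_singleton_iff.2 hx
    -- cardinality of G is 8
    have hCf : (Finset.univ.filter (fun x : G => x * a = a * x)).card = 4 := by
      rw [← hcc, Nat.card_eq_fintype_card, ← Fintype.card_subtype]
      apply Fintype.card_congr
      exact (Equiv.subtypeEquivRight fun x => Subgroup.mem_centralizer_singleton_iff).symm
    have hOf : (Finset.univ.filter (fun x : G => ¬ (x * a = a * x))).card =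
        (Finset.univ.filter (fun x : G => x * a = a * x)).card := by
      apply Finset.card_bij' (i := fun y _ => u⁻¹ * y) (j := fun x _ => u * x)
      · intro y hy
        simp only [Finset.mem_filter, Finset.mem_univ, true_and] at hy ⊢
        exact my_conj_out_comm (hanti y hy) huanti
      · intro x hx
        simp only [Finset.mem_filter, Finset.mem_univ, true_and] at hx ⊢
        intro hq
        have hxconj : x * a * x⁻¹ = a := by rw [hx]; group
        have h2 : (u * x) * a * (u * x)⁻¹ = a⁻¹ := by
          calc (u * x) * a * (u * x)⁻¹ = u * (x * a * x⁻¹) * u⁻¹ := by group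
            _ = u * a * u⁻¹ := by rw [hxconj]
            _ = a⁻¹ := huanti
        rw [← mul_inv_eq_iff_eq_mul] at hq
        rw [hq] at h2
        apply ha2
        rw [pow_two]
        nth_rewrite 2 [h2]
        exact mul_inv_cancel a
      · intro y _; group
      · intro x _; group
    have hG8 : Nat.card G = 8 := by
      rw [Nat.card_eq_fintype_card, ← Finset.card_univ,
        ← Finset.card_filter_add_card_filter_not
          (p := fun x : G => x * a = a * x), hOf, hCf]
    -- u^2 lands in zpowers a
    have hu2mem : u ^ 2 ∈ Subgroup.zpowers a := by
      apply hmemz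
      have h1 : (u * u) * a * (u * u)⁻¹ = a := by
        calc (u * u) * a * (u * u)⁻¹ = u * (u * a * u⁻¹) * u⁻¹ := by group
          _ = u * a⁻¹ * u⁻¹ := by rw [huanti]
          _ = (u * a * u⁻¹)⁻¹ := by group
          _ = a := by rw [huanti, inv_inv]
      rw [pow_two, mul_inv_eq_iff_eq_mul.1 h1]
    have hOsq : ∀ x : G, ¬ (x * a = a * x) → x ^ 2 = u ^ 2 := by
      intro x hx
      apply my_out_sq huanti
      apply hmemz
      exact my_conj_out_comm (hanti x hx) huanti
    have hu4 : (u ^ 2) ^ 2 = 1 := by rw [← pow_mul]; norm_num; exact hexp u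
    rcases (my_mem_zpowers_iff ha4' (u ^ 2)).1 hu2mem with hu2 | hu2 | hu2 | hu2
    · -- D8 case
      have hfil : Finset.univ.filter (fun x : G => orderOf x = 4) = {a, a ^ 3} := by
        ext x
        simp only [Finset.mem_filter, Finset.mem_univ, true_and, Finset.mem_insert,
          Finset.mem_singleton]
        constructor
        · intro hx
          by_cases hp : x * a = a * x
          · rcases (my_mem_zpowers_iff ha4' x).1 (hmemz x hp) with rfl | rfl | rfl | rfl
            · exact absurd hx (by simp)
            · exact Or.inl rfl
            · exact absurd ha2sq (my_order4_sq_ne_one hx)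
            · exact Or.inr rfl
          · exfalso
            apply my_order4_sq_ne_one hx
            rw [hOsq x hp, hu2]
        · rintro (rfl | rfl)
          · exact ha4
          · exact ha3o
      have hfc : (({a, a ^ 3} : Finset G)).card = 2 := by
        rw [Finset.card_insert_of_notMem (by simpa using my_order4_ne_cube ha4),
          Finset.card_singleton]
      have hcount : Nat.card {H : Subgroup G // IsCyclic H ∧ Nat.card H = 4} = 1 := by
        rw [hfil, hfc] at hcount2
        omega
      exact Or.inl ⟨hcount, Or.inr (my_d8_iso ha4 hG8 huanti hu2 hunot)⟩
    · -- u^2 = a : impossible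
      exfalso
      apply ha2
      rw [← hu2]
      exact hu4
    · -- Q8 case
      have hfil : Finset.univ.filter (fun x : G => orderOf x = 4)
          = Finset.univ \ {1, a ^ 2} := by
        ext x
        simp only [Finset.mem_filter, Finset.mem_univ, true_and, Finset.mem_sdiff,
          Finset.mem_insert, Finset.mem_singleton]
        constructor
        · intro hx
          rintro (rfl | rfl)
          · exact my_order4_ne_one hx rfl
          · exact my_order4_sq_ne_one hx ha2sq
        · intro hx
          push_neg at hx
          by_cases hp : x * a = a * x
          · rcases (my_mem_zpowers_iff ha4' x).1 (hmemz x hp) with rfl | rfl | rfl | rfl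
            · exact absurd rfl hx.1
            · exact ha4
            · exact absurd rfl hx.2
            · exact ha3o
          · rw [my_order4_iff hall]
            rw [hOsq x hp, hu2]
            exact ha2
      have hfc : (Finset.univ \ ({1, a ^ 2} : Finset G)).card = 6 := by
        rw [Finset.card_sdiff_of_subset (Finset.subset_univ _), Finset.card_univ,
          ← Nat.card_eq_fintype_card, hG8,
          Finset.card_insert_of_notMem (by simpa using (Ne.symm ha2)),
          Finset.card_singleton]
      have hcount : Nat.card {H : Subgroup G // IsCyclic H ∧ Nat.card H = 4} = 3 := by
        rw [hfil, hfc] at hcount2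
        omega
      exact Or.inr ⟨hcount, my_q8_iso ha4 hG8 huanti hu2 hunot⟩
    · -- u^2 = a^3 : impossible
      exfalso
      apply ha2
      have : (u ^ 2) ^ 2 = (a ^ 3) ^ 2 := by rw [hu2]
      rw [hu4, ← pow_mul] at this
      have h6 : a ^ 6 = a ^ 2 := by
        rw [show (6 : ℕ) = 4 + 2 by norm_num, pow_add, ha4', one_mul]
      rw [show (3 * 2 : ℕ) = 6 by norm_num, h6] at this
      exact this.symm

end endgame


theorem stmt_15 (G : Type*) [Group G] [Finite G]
    (hall : ∀ H : Subgroup G, IsCyclic H → H ≠ ⊥ →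
      Nat.card H = 2 ∨ Nat.card H = 4)
    (hodd : Odd (Nat.card {H : Subgroup G // IsCyclic H ∧ Nat.card H = 4})) :
    (Nat.card {H : Subgroup G // IsCyclic H ∧ Nat.card H = 4} = 1 ∧
      (Nonempty (G ≃* Multiplicative (ZMod 4)) ∨ Nonempty (G ≃* DihedralGroup 4))) ∨
    (Nat.card {H : Subgroup G // IsCyclic H ∧ Nat.card H = 4} = 3 ∧
      Nonempty (G ≃* QuaternionGroup 2)) := by
  exact my_main G hall hodd
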